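/- Let d ≥ 1, θ ∈ [−1,1] \ {0}, C(u,v) = u·v₁···v_d + θ·u(1−u)·v₁(1−v₁)·Π_{i=2}^d v_i, and F(x) = (1/3)·1_{[1,2)}(x) + (2/3)·1_{[2,3)}(x) + 1_{[3,∞)}(x). For α ∈ (0,1] with α ≠ 1/2 and any v₁ ∈ (0,1), ∫_{[0,1]×[0,v₁]×[0,1]^{d-1}} 𝔠_{α,F,C}(s,t) dλ^{d+1}(s,t) = v₁ + θ·v₁(1−v₁)·(1−2α)/3 ≠ v₁. Consequently 𝔠_{α,F,C} fails to be a copula density. -/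

import Mathlib

open MeasureTheory Set Filter

/-- `F(n-1)` with the convention `F(-1) = 0`. -/
noncomputable def Fm (F : ℕ → ℝ) : ℕ → ℝ := fun n => if n = 0 then 0 else F (n - 1)

/-- `F_α(n) = (1-α) F(n-1) + α F(n)`. -/
noncomputable def Falpha (α : ℝ) (F : ℕ → ℝ) (n : ℕ) : ℝ :=
  (1 - α) * Fm F n + α * F n

/-- `⌈u⌉_{α,F} = Σ_{n ≥ 0} F_α(n) · 1_{(F(n-1), F(n)]}(u)`, with `⌈0⌉ = 0` automatic. -/
noncomputable def ceilT (α : ℝ) (F : ℕ → ℝ) (u : ℝ) : ℝ :=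
  ∑' n : ℕ, Falpha α F n * Set.indicator (Set.Ioc (Fm F n) (F n)) (fun _ => (1 : ℝ)) u

/-- The three-point distribution function on `ℕ₀` with jumps `1/3` at `1`, `2`, `3`:
`F(0)=0, F(1)=1/3, F(2)=2/3, F(n)=1` for `n ≥ 3`. -/
noncomputable def Fex : ℕ → ℝ := fun n => min 1 ((n : ℝ) / 3)

lemma Fex_ge (n : ℕ) (hn : 3 ≤ n) : Fex n = 1 := by
  have : (3 : ℝ) ≤ (n : ℝ) := by exact_mod_cast hn
  simp [Fex, min_eq_left, div_le_one, *]
  linarith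

lemma ceilT_eq (α u : ℝ) : ceilT α Fex u =
    Falpha α Fex 1 * Set.indicator (Set.Ioc (0 : ℝ) (1/3)) (fun _ => (1:ℝ)) u
    + Falpha α Fex 2 * Set.indicator (Set.Ioc (1/3 : ℝ) (2/3)) (fun _ => (1:ℝ)) u
    + Falpha α Fex 3 * Set.indicator (Set.Ioc (2/3 : ℝ) 1) (fun _ => (1:ℝ)) u := by
  rw [ceilT, tsum_eq_sum (s := Finset.range 4) ?_]
  · have h0 : Fm Fex 0 = 0 := by simp [Fm]
    have h1 : Fm Fex 1 = 0 := by norm_num [Fm, Fex]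
    have h2 : Fm Fex 2 = 1/3 := by norm_num [Fm, Fex]
    have h3 : Fm Fex 3 = 2/3 := by norm_num [Fm, Fex]
    have e1 : Fex 1 = 1/3 := by norm_num [Fex]
    have e2 : Fex 2 = 2/3 := by norm_num [Fex]
    have e3 : Fex 3 = 1 := by norm_num [Fex]
    rw [Finset.sum_range_succ, Finset.sum_range_succ, Finset.sum_range_succ,
      Finset.sum_range_succ, Finset.sum_range_zero]
    rw [h0, h1, h2, h3, e1, e2, e3]
    simp [Fex]
  · intro n hn
    simp only [Finset.mem_range, not_lt] at hn
    have hF : Fex n = 1 := Fex_ge n (by omega)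
    have hFm : Fm Fex n = 1 := by
      rw [Fm, if_neg (by omega), Fex_ge _ (by omega)]
    rw [hF, hFm]
    simp

lemma ind_int (a b : ℝ) (hab : a ≤ b) (h0 : 0 ≤ a) (h1 : b ≤ 1) :
    ∫ u in Icc (0:ℝ) 1, Set.indicator (Set.Ioc a b) (fun _ => (1:ℝ)) u = b - a := by
  rw [MeasureTheory.setIntegral_indicator measurableSet_Ioc]
  have : Icc (0:ℝ) 1 ∩ Ioc a b = Ioc a b := by
    apply inter_eq_right.mpr
    exact (Ioc_subset_Icc_self).trans (Icc_subset_Icc h0 h1)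
  rw [this]
  simp [Real.volume_Ioc, ENNReal.toReal_ofReal (by linarith : (0:ℝ) ≤ b - a), hab]

lemma ind_intg (a b : ℝ) :
    IntegrableOn (Set.indicator (Set.Ioc a b) (fun _ => (1:ℝ))) (Icc (0:ℝ) 1) volume := by
  apply Integrable.indicator _ measurableSet_Ioc
  exact integrableOn_const (by simp [Real.volume_Icc])

lemma ceil_rw (α : ℝ) : ∀ u : ℝ, (1 : ℝ) - 2 * ceilT α Fex u =
    1 - (2 * Falpha α Fex 1) * Set.indicator (Set.Ioc (0 : ℝ) (1/3)) (fun _ => (1:ℝ)) u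
      - (2 * Falpha α Fex 2) * Set.indicator (Set.Ioc (1/3 : ℝ) (2/3)) (fun _ => (1:ℝ)) u
      - (2 * Falpha α Fex 3) * Set.indicator (Set.Ioc (2/3 : ℝ) 1) (fun _ => (1:ℝ)) u := by
  intro u; rw [ceilT_eq]; ring

lemma intA_intg (α : ℝ) :
    IntegrableOn (fun u => (1 : ℝ) - 2 * ceilT α Fex u) (Icc (0:ℝ) 1) volume := by
  simp_rw [ceil_rw α]
  refine (((Integrable.sub ?_ ((ind_intg _ _).const_mul _)).sub
    ((ind_intg _ _).const_mul _)).sub ((ind_intg _ _).const_mul _))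
  exact integrableOn_const (by simp [Real.volume_Icc])

lemma intA (α : ℝ) :
    ∫ u in Icc (0:ℝ) 1, (1 - 2 * ceilT α Fex u) = (1 - 2 * α) / 3 := by
  simp_rw [ceil_rw α]
  have hc : IntegrableOn (fun _ => (1:ℝ)) (Icc (0:ℝ) 1) volume :=
    integrableOn_const (by simp [Real.volume_Icc])
  have hB1 : IntegrableOn (fun u => 2 * Falpha α Fex 1 *
      Set.indicator (Set.Ioc (0 : ℝ) (1/3)) (fun _ => (1:ℝ)) u) (Icc (0:ℝ) 1) volume :=
    (ind_intg _ _).const_mul _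
  have hB2 : IntegrableOn (fun u => 2 * Falpha α Fex 2 *
      Set.indicator (Set.Ioc (1/3 : ℝ) (2/3)) (fun _ => (1:ℝ)) u) (Icc (0:ℝ) 1) volume :=
    (ind_intg _ _).const_mul _
  have hB3 : IntegrableOn (fun u => 2 * Falpha α Fex 3 *
      Set.indicator (Set.Ioc (2/3 : ℝ) 1) (fun _ => (1:ℝ)) u) (Icc (0:ℝ) 1) volume :=
    (ind_intg _ _).const_mul _
  have hA1 : IntegrableOn (fun u => 1 - 2 * Falpha α Fex 1 *
      Set.indicator (Set.Ioc (0 : ℝ) (1/3)) (fun _ => (1:ℝ)) u) (Icc (0:ℝ) 1) volume :=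
    hc.sub hB1
  have hA2 : IntegrableOn (fun u => 1 - 2 * Falpha α Fex 1 *
      Set.indicator (Set.Ioc (0 : ℝ) (1/3)) (fun _ => (1:ℝ)) u - 2 * Falpha α Fex 2 *
      Set.indicator (Set.Ioc (1/3 : ℝ) (2/3)) (fun _ => (1:ℝ)) u) (Icc (0:ℝ) 1) volume :=
    hA1.sub hB2
  rw [integral_sub hA2 hB3, integral_sub hA1 hB2, integral_sub hc hB1]
  rw [integral_const_mul, integral_const_mul, integral_const_mul]
  rw [ind_int 0 (1/3) (by norm_num) le_rfl (by norm_num),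
    ind_int (1/3) (2/3) (by norm_num) (by norm_num) (by norm_num),
    ind_int (2/3) 1 (by norm_num) (by norm_num) le_rfl]
  have f1 : Falpha α Fex 1 = α / 3 := by norm_num [Falpha, Fm, Fex]; ring
  have f2 : Falpha α Fex 2 = (1 + α) / 3 := by norm_num [Falpha, Fm, Fex]; ring
  have f3 : Falpha α Fex 3 = (2 + α) / 3 := by norm_num [Falpha, Fm, Fex]; ring
  rw [f1, f2, f3]
  simp [Real.volume_Icc]
  ring

lemma upd_apply (d : ℕ) [NeZero d] (v₁ : ℝ) (i : Fin d) :
    Function.update (fun _ => (1 : ℝ)) 0 v₁ i = if i = 0 then v₁ else 1 := by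
  simp [Function.update]

lemma volB (d : ℕ) [NeZero d] (v₁ : ℝ) (h0 : 0 ≤ v₁) (h1 : v₁ ≤ 1) :
    (volume (Icc (0 : Fin d → ℝ) (Function.update (fun _ => (1 : ℝ)) 0 v₁))).toReal = v₁ := by
  rw [Real.volume_Icc_pi_toReal]
  · rw [Finset.prod_eq_single 0]
    · simp [upd_apply]
    · intro i _ hi; simp [upd_apply, hi]
    · simp
  · intro i
    rw [upd_apply]
    split <;> simp [h0]

lemma intB (d : ℕ) [NeZero d] (v₁ : ℝ) (h0 : 0 ≤ v₁) (h1 : v₁ ≤ 1) :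
    ∫ v in Icc (0 : Fin d → ℝ) (Function.update (fun _ => (1 : ℝ)) 0 v₁),
      (1 - 2 * v 0) = v₁ * (1 - v₁) := by
  set b : Fin d → ℝ := Function.update (fun _ => (1 : ℝ)) (0 : Fin d) v₁ with hb
  set h : Fin d → ℝ → ℝ := fun i t =>
    if i = 0 then (Icc (0:ℝ) v₁).indicator (fun s => 1 - 2*s) t
    else (Icc (0:ℝ) 1).indicator (fun _ => (1:ℝ)) t with hh
  have key : ∀ v : Fin d → ℝ,
      (Icc (0 : Fin d → ℝ) b).indicator (fun v => 1 - 2 * v 0) v = ∏ i, h i (v i) := by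
    intro v
    have hpi : Icc (0 : Fin d → ℝ) b = univ.pi (fun i => Icc 0 (b i)) :=
      (Set.pi_univ_Icc 0 b).symm
    by_cases hv : v ∈ Icc (0 : Fin d → ℝ) b
    · have hmem : ∀ i, v i ∈ Icc (0:ℝ) (b i) := by
        intro i
        have := hpi ▸ hv
        exact this i (mem_univ i)
      rw [indicator_of_mem hv]
      rw [Finset.prod_eq_single 0]
      · have : v 0 ∈ Icc (0:ℝ) v₁ := by
          have := hmem 0; rwa [hb, Function.update_self] at this
        simp [hh, indicator_of_mem this]
      · intro i _ hi
        have : v i ∈ Icc (0:ℝ) 1 := by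
          have := hmem i; rwa [hb, upd_apply d v₁ i, if_neg hi] at this
        simp [hh, if_neg hi, indicator_of_mem this]
      · simp
    · rw [indicator_of_notMem hv]
      rw [hpi] at hv
      simp only [Set.mem_pi, mem_univ, forall_true_left, not_forall] at hv
      obtain ⟨i, hi⟩ := hv
      refine (Finset.prod_eq_zero (Finset.mem_univ i) ?_).symm
      by_cases hi0 : i = 0
      · subst hi0
        have : v 0 ∉ Icc (0:ℝ) v₁ := by
          rw [hb, Function.update_self] at hi; simpa using hi
        simp [hh, indicator_of_notMem this]
      · have : v i ∉ Icc (0:ℝ) 1 := by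
          rw [hb, upd_apply d v₁ i, if_neg hi0] at hi; simpa using hi
        simp [hh, if_neg hi0, indicator_of_notMem this]
  rw [← integral_indicator measurableSet_Icc]
  simp_rw [key]
  rw [volume_pi, MeasureTheory.integral_fintype_prod_eq_prod (f := h)]
  rw [Finset.prod_eq_single 0]
  · have : ∫ t, h 0 t = v₁ * (1 - v₁) := by
      simp only [hh, if_pos rfl]
      rw [integral_indicator measurableSet_Icc,
        MeasureTheory.integral_Icc_eq_integral_Ioc,
        ← intervalIntegral.integral_of_le h0]
      rw [intervalIntegral.integral_sub intervalIntegrable_const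
        ((intervalIntegral.intervalIntegrable_id).const_mul 2)]
      rw [intervalIntegral.integral_const_mul, integral_id]
      simp
      ring
    rw [this]
  · intro i _ hi
    simp only [hh, if_neg hi]
    rw [integral_indicator measurableSet_Icc]
    simp [Real.volume_Icc]
  · simp

lemma intB_intg (d : ℕ) [NeZero d] (v₁ : ℝ) :
    IntegrableOn (fun v : Fin d → ℝ => (1:ℝ) - 2 * v 0)
      (Icc (0 : Fin d → ℝ) (Function.update (fun _ => (1 : ℝ)) 0 v₁)) volume := by
  exact ContinuousOn.integrableOn_compact isCompact_Icc
    (continuous_const.sub (continuous_const.mul (continuous_apply 0))).continuousOn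

/-- for the FGM-type copula with density `c(u,v) = 1 + θ(1−2u)(1−2v₁)`
(`θ ≠ 0`) and the three-point distribution `Fex`, for `α ≠ 1/2` and any `v₁ ∈ (0,1)`,
`∫_{[0,1]×[0,v₁]×[0,1]^{d−1}} 𝔠_{α,F,C} = v₁ + θ v₁(1−v₁)(1−2α)/3 ≠ v₁`;
consequently `𝔠_{α,F,C}` fails to be a copula density. -/
theorem stmt8 (d : ℕ) [NeZero d] (θ α : ℝ) (hθ : θ ∈ Set.Icc (-1 : ℝ) 1) (hθ0 : θ ≠ 0)
    (hα : α ∈ Set.Ioc (0 : ℝ) 1) (hα2 : α ≠ 1 / 2) :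
    ∀ v₁ ∈ Set.Ioo (0 : ℝ) 1,
      (∫ p in (Set.Icc (0 : ℝ) 1) ×ˢ
            (Set.Icc (0 : Fin d → ℝ) (Function.update (fun _ => (1 : ℝ)) 0 v₁)),
          (1 + θ * (1 - 2 * ceilT α Fex p.1) * (1 - 2 * p.2 0)) =
        v₁ + θ * v₁ * (1 - v₁) * ((1 - 2 * α) / 3)) ∧
      v₁ + θ * v₁ * (1 - v₁) * ((1 - 2 * α) / 3) ≠ v₁ := by
  intro v₁ hv
  obtain ⟨hv0, hv1⟩ := hv
  set A : Set ℝ := Icc (0:ℝ) 1 with hA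
  set B : Set (Fin d → ℝ) :=
    Icc (0 : Fin d → ℝ) (Function.update (fun _ => (1 : ℝ)) 0 v₁) with hB
  constructor
  · have hvolA : volume A ≠ ⊤ := by simp [hA, Real.volume_Icc]
    have hvolB : volume B ≠ ⊤ := by
      rw [hB, Real.volume_Icc_pi]
      exact ENNReal.prod_ne_top (fun i _ => ENNReal.ofReal_ne_top)
    have hvolAB : volume (A ×ˢ B) < ⊤ := by
      rw [Measure.volume_eq_prod, Measure.prod_prod]
      exact ENNReal.mul_lt_top hvolA.lt_top hvolB.lt_top
    have ha' : IntegrableOn (fun _ : ℝ × (Fin d → ℝ) => (1:ℝ)) (A ×ˢ B) volume :=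
      integrableOn_const hvolAB.ne
    have hb' : IntegrableOn
        (fun p : ℝ × (Fin d → ℝ) => θ * (1 - 2 * ceilT α Fex p.1) * (1 - 2 * p.2 0))
        (A ×ˢ B) volume := by
      rw [IntegrableOn, Measure.volume_eq_prod, ← Measure.prod_restrict]
      exact Integrable.mul_prod ((intA_intg α).const_mul θ) (intB_intg d v₁)
    have step := integral_add ha' hb'
    rw [step]
    have I1 : ∫ _ in A ×ˢ B, (1:ℝ) = v₁ := by
      rw [setIntegral_const, smul_eq_mul, mul_one, measureReal_def,
        Measure.volume_eq_prod, Measure.prod_prod, ENNReal.toReal_mul]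
      rw [hA, hB]
      rw [volB d v₁ hv0.le hv1.le]
      simp [Real.volume_Icc]
    have I2 : ∫ p in A ×ˢ B,
        θ * (1 - 2 * ceilT α Fex p.1) * (1 - 2 * p.2 0) =
        θ * ((1 - 2*α)/3) * (v₁ * (1 - v₁)) := by
      rw [Measure.volume_eq_prod,
        setIntegral_prod_mul (fun u => θ * (1 - 2 * ceilT α Fex u))
          (fun v : Fin d → ℝ => 1 - 2 * v 0) A B]
      rw [integral_const_mul, hA, hB, intA α, intB d v₁ hv0.le hv1.le]
    rw [I1, I2]
    ring
  · intro h
    have h2α : (1 - 2 * α) / 3 ≠ 0 := by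
      intro h'; apply hα2; field_simp at h'; linarith
    have : θ * v₁ * (1 - v₁) * ((1 - 2 * α) / 3) ≠ 0 :=
      mul_ne_zero (mul_ne_zero (mul_ne_zero hθ0 (ne_of_gt hv0))
        (by linarith : (1 : ℝ) - v₁ ≠ 0)) h2α
    exact this (by linarith)
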